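/- For every integer n ≥ 1, let d_n be the real number defined by |Σ_{k=n}^∞ (−1)^k s_k| = (s_n/(1+ε)) · exp(a₁/n + (a₂ − a₁²/2)/n² + d_n·ε/n³). Then 0.321 < d_n < 0.671. -/

import Mathlib

open Real Filter

/-- `S = 13591409/545140134` from the Chudnovsky series. -/
noncomputable def S : ℝ := 13591409 / 545140134

/-- `ε = 1728/640320³ = 53360⁻³`. -/
noncomputable def eps : ℝ := 1728 / 640320 ^ 3

/-- The terms `s_k = (6k)!/((3k)!·(k!)³) · (k+S)/640320^{3k}` of the Chudnovsky series. -/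
noncomputable def s (k : ℕ) : ℝ :=
  (Nat.factorial (6 * k) : ℝ) / ((Nat.factorial (3 * k) : ℝ) * (Nat.factorial k : ℝ) ^ 3)
    * ((k : ℝ) + S) / 640320 ^ (3 * k)

/-- `a₁ = ε/(2(1+ε))`. -/
noncomputable def a1 : ℝ := eps / (2 * (1 + eps))

/-- `a₂ = S·ε/(1+ε) − (23ε − 4ε²)/(36(1+ε)²)`. -/
noncomputable def a2 : ℝ :=
  S * eps / (1 + eps) - (23 * eps - 4 * eps ^ 2) / (36 * (1 + eps) ^ 2)


lemma S_pos : 0 < S := by unfold S; norm_num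

lemma eps_pos : 0 < eps := by unfold eps; norm_num

lemma fact_cast_pos (m : ℕ) : (0:ℝ) < (Nat.factorial m : ℝ) := by
  exact_mod_cast m.factorial_pos

lemma s_pos (n : ℕ) : 0 < s n := by
  unfold s
  have h1 := fact_cast_pos (6*n)
  have h2 := fact_cast_pos (3*n)
  have h3 := fact_cast_pos n
  have hS : (0:ℝ) < (n:ℝ) + S := by
    have := S_pos
    positivity
  exact div_pos (mul_pos (div_pos h1 (by positivity)) hS) (by positivity)

lemma s_ratio (n : ℕ) : s (n+1) * (72*((n:ℝ)+1)^3*((n:ℝ)+S)) =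
    s n * (eps*(6*(n:ℝ)+1)*(6*(n:ℝ)+5)*(2*(n:ℝ)+1)*((n:ℝ)+1+S)) := by
  have h6 : (6*(n+1)).factorial =
      (6*n+6)*((6*n+5)*((6*n+4)*((6*n+3)*((6*n+2)*((6*n+1)*(6*n).factorial))))) := by
    rw [show 6*(n+1) = (6*n+5)+1 by ring, Nat.factorial_succ,
        show 6*n+5 = (6*n+4)+1 by ring, Nat.factorial_succ,
        show 6*n+4 = (6*n+3)+1 by ring, Nat.factorial_succ,
        show 6*n+3 = (6*n+2)+1 by ring, Nat.factorial_succ,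
        show 6*n+2 = (6*n+1)+1 by ring, Nat.factorial_succ,
        show 6*n+1 = (6*n)+1 by ring, Nat.factorial_succ]
  have h3 : (3*(n+1)).factorial = (3*n+3)*((3*n+2)*((3*n+1)*(3*n).factorial)) := by
    rw [show 3*(n+1) = (3*n+2)+1 by ring, Nat.factorial_succ,
        show 3*n+2 = (3*n+1)+1 by ring, Nat.factorial_succ,
        show 3*n+1 = (3*n)+1 by ring, Nat.factorial_succ]
  have h1 : (n+1).factorial = (n+1)*n.factorial := Nat.factorial_succ n
  have hp : (640320:ℝ) ^ (3*(n+1)) = 640320 ^ (3*n) * 640320^3 := by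
    rw [show 3*(n+1) = 3*n+3 by ring, pow_add]
  unfold s eps
  rw [h6, h3, h1, hp]
  have hf3 : ((3*n).factorial : ℝ) ≠ 0 := ne_of_gt (fact_cast_pos _)
  have hf1 : ((n).factorial : ℝ) ≠ 0 := ne_of_gt (fact_cast_pos _)
  have hpw : (640320:ℝ) ^ (3*n) ≠ 0 := by positivity
  push_cast
  field_simp
  ring


lemma cert_half (x : ℝ) (hx : 0 ≤ x) : 2*(eps*(6*x+1)*(6*x+5)*(2*x+1)*(x+1+S)) ≤ 72*(x+1)^3*(x+S) := by
  have key : (72*(x+1)^3*(x+S)) - (2*(eps*(6*x+1)*(6*x+5)*(2*x+1)*(x+1+S))) = ((14867722304176307777257:ℝ)/8282388906655182950400) + ((1300598961427958779393:ℝ)/16806795670972368000)*x^1 + ((127333275746530071730711:ℝ)/575165896295498816000)*x^2 + ((7829269644712137860391:ℝ)/35947868518468676000)*x^3 + ((683691178751991:ℝ)/9495710816000)*x^4 := by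
    simp only [a1, a2, eps, S]; norm_num; ring
  have hy : (0:ℝ) ≤ x := by linarith
  have hp2 : (0:ℝ) ≤ x^2 := pow_nonneg hy 2
  have hp3 : (0:ℝ) ≤ x^3 := pow_nonneg hy 3
  have hp4 : (0:ℝ) ≤ x^4 := pow_nonneg hy 4
  nlinarith [key, hy, hp2, hp3, hp4]

lemma cert_3eps (x : ℝ) (hx : 0 ≤ x) : eps*(6*x+1)*(6*x+5)*(2*x+1)*(x+1+S) ≤ 3*eps*(72*(x+1)^3*(x+S)) := by
  have key : (3*eps*(72*(x+1)^3*(x+S))) - (eps*(6*x+1)*(6*x+5)*(2*x+1)*(x+1+S)) = ((142086629:ℝ)/82823889066551829504000) + ((1752324113:ℝ)/1478998019045568384000)*x^1 + ((1921101299:ℝ)/575165896295498816000)*x^2 + ((3570593689:ℝ)/1150331792590997632000)*x^3 + ((9:ℝ)/9495710816000)*x^4 := by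
    simp only [a1, a2, eps, S]; norm_num; ring
  have hy : (0:ℝ) ≤ x := by linarith
  have hp2 : (0:ℝ) ≤ x^2 := pow_nonneg hy 2
  have hp3 : (0:ℝ) ≤ x^3 := pow_nonneg hy 3
  have hp4 : (0:ℝ) ≤ x^4 := pow_nonneg hy 4
  nlinarith [key, hy, hp2, hp3, hp4]

lemma cert_Mhalf (x : ℝ) (hx : 1 ≤ x) : (1+eps)*x^3 ≤ 2*(x^3 + a1*x^2 + a2*x + (62/125)*eps) := by
  have key : (2*(x^3 + a1*x^2 + a2*x + (62/125)*eps)) - ((1+eps)*x^3) = ((146127228189087384598004341103818949580629333:ℝ)/146127228189087611499394433016546068544000000) + ((3507053476538085533567978852364874692607999:ℝ)/1169017825512700891995155464132368548352000)*(x-1)^1 + ((69249426356044480268781055997:ℝ)/23083142118681594710509056000)*(x-1)^2 + ((151931373055999:ℝ)/151931373056000)*(x-1)^3 := by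
    simp only [a1, a2, eps, S]; norm_num; ring
  have hy : (0:ℝ) ≤ (x-1) := by linarith
  have hp2 : (0:ℝ) ≤ (x-1)^2 := pow_nonneg hy 2
  have hp3 : (0:ℝ) ≤ (x-1)^3 := pow_nonneg hy 3
  nlinarith [key, hy, hp2, hp3]

lemma cert_Mone (x : ℝ) (hx : 1 ≤ x) : x^3 + a1*x^2 + a2*x + (62/125)*eps ≤ (1+eps)*x^3 := by
  have key : ((1+eps)*x^3) - (x^3 + a1*x^2 + a2*x + (62/125)*eps) = ((594349489185159418598692352021:ℝ)/146127228189087611499394433016546068544000000) + ((20112779803110889436417280001:ℝ)/1169017825512700891995155464132368548352000)*(x-1)^1 + ((379828432640003:ℝ)/23083142118681594710509056000)*(x-1)^2 + ((1:ℝ)/151931373056000)*(x-1)^3 := by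
    simp only [a1, a2, eps, S]; norm_num; ring
  have hy : (0:ℝ) ≤ (x-1) := by linarith
  have hp2 : (0:ℝ) ≤ (x-1)^2 := pow_nonneg hy 2
  have hp3 : (0:ℝ) ≤ (x-1)^3 := pow_nonneg hy 3
  nlinarith [key, hy, hp2, hp3]

lemma cert_Mnn (x : ℝ) (hx : 1 ≤ x) : (0:ℝ) ≤ x^3 + a1*x^2 + a2*x + (62/125)*eps := by
  have key : (x^3 + a1*x^2 + a2*x + (62/125)*eps) - ((0:ℝ)) = ((73063614094543989473746763131618774136490677:ℝ)/73063614094543805749697216508273034272000000) + ((46166284237363532385132898871:ℝ)/15388761412454497761254741334)*(x-1)^1 + ((911588238336007:ℝ)/303862746112002)*(x-1)^2 + (1:ℝ)*(x-1)^3 := by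
    simp only [a1, a2, eps, S]; norm_num; ring
  have hy : (0:ℝ) ≤ (x-1) := by linarith
  have hp2 : (0:ℝ) ≤ (x-1)^2 := pow_nonneg hy 2
  have hp3 : (0:ℝ) ≤ (x-1)^3 := pow_nonneg hy 3
  nlinarith [key, hy, hp2, hp3]

lemma cert_A1 (x : ℝ) (hx : 1 ≤ x) : a1*x^2 + (a2 - a1^2/2)*x + (671/1000)*eps ≤ 2*eps*x^2 := by
  have key : (2*eps*x^2) - (a1*x^2 + (a2 - a1^2/2)*x + (671/1000)*eps) = ((33307979988356286017342990849329:ℝ)/3507053476538102675985466392397105645056000000) + ((20855370382003608485638896001:ℝ)/876763369134525668996366598099276411264000)*(x-1)^1 + ((113948529792001:ℝ)/11541571059340797355254528000)*(x-1)^2 := by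
    simp only [a1, a2, eps, S]; norm_num; ring
  have hy : (0:ℝ) ≤ (x-1) := by linarith
  have hp2 : (0:ℝ) ≤ (x-1)^2 := pow_nonneg hy 2
  nlinarith [key, hy, hp2]

lemma cert_A2 (x : ℝ) (hx : 1 ≤ x) : -(2*eps*x^2) ≤ a1*x^2 + (a2 - a1^2/2)*x + (671/1000)*eps := by
  have key : (a1*x^2 + (a2 - a1^2/2)*x + (671/1000)*eps) - (-(2*eps*x^2)) = ((59024588486370700550185457154671:ℝ)/3507053476538102675985466392397105645056000000) + ((25310913855359884798125328001:ℝ)/876763369134525668996366598099276411264000)*(x-1)^1 + ((189914216320001:ℝ)/11541571059340797355254528000)*(x-1)^2 := by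
    simp only [a1, a2, eps, S]; norm_num; ring
  have hy : (0:ℝ) ≤ (x-1) := by linarith
  have hp2 : (0:ℝ) ≤ (x-1)^2 := pow_nonneg hy 2
  nlinarith [key, hy, hp2]

lemma cert_A3 (x : ℝ) (hx : 1 ≤ x) : a1*x^2 + (a2 - a1^2/2)*x + (321/1000)*eps ≤ 2*eps*x^2 := by
  have key : (2*eps*x^2) - (a1*x^2 + (a2 - a1^2/2)*x + (321/1000)*eps) = ((1799438249125865101826162176073:ℝ)/152480585936439246781976799669439375872000000) + ((20855370382003608485638896001:ℝ)/876763369134525668996366598099276411264000)*(x-1)^1 + ((113948529792001:ℝ)/11541571059340797355254528000)*(x-1)^2 := by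
    simp only [a1, a2, eps, S]; norm_num; ring
  have hy : (0:ℝ) ≤ (x-1) := by linarith
  have hp2 : (0:ℝ) ≤ (x-1)^2 := pow_nonneg hy 2
  nlinarith [key, hy, hp2]

lemma cert_A4 (x : ℝ) (hx : 1 ≤ x) : -(2*eps*x^2) ≤ a1*x^2 + (a2 - a1^2/2)*x + (321/1000)*eps := by
  have key : (a1*x^2 + (a2 - a1^2/2)*x + (321/1000)*eps) - (-(2*eps*x^2)) = ((50945488744832089225526717954321:ℝ)/3507053476538102675985466392397105645056000000) + ((25310913855359884798125328001:ℝ)/876763369134525668996366598099276411264000)*(x-1)^1 + ((189914216320001:ℝ)/11541571059340797355254528000)*(x-1)^2 := by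
    simp only [a1, a2, eps, S]; norm_num; ring
  have hy : (0:ℝ) ≤ (x-1) := by linarith
  have hp2 : (0:ℝ) ≤ (x-1)^2 := pow_nonneg hy 2
  nlinarith [key, hy, hp2]

lemma certPhi (x : ℝ) (hx : 1 ≤ x) : 0 ≤ ((13849696318627002032319523:ℝ)/1747714887183200780546046033920000000000) + ((1204016746735649807662631647564974744799228363151957603:ℝ)/3361895926982138256231452633668509680510713883528273756160000000000)*x^1 + ((7608455869434965104576167068253694112900400722304237937:ℝ)/4482527902642851008308603511558012907347618511371031674880000000000)*x^2 + ((40737172240211486527407742071844786383733603389944150689:ℝ)/12102825337135697722433229481206634849838569980701785522176000000000)*x^3 + ((27241816191496157408407736952266524962229754957731939889:ℝ)/8068550224757131814955486320804423233225713320467857014784000000000)*x^4 + ((55470417496095109948355149260022037029184294843117687:ℝ)/32604594119438840847072277697216149918746147577321620480000000000)*x^5 + ((220264712838254466112724933721410078594859545344246577:ℝ)/640361128948978715472657644508287558192516930195861667840000000000)*x^6 + ((4514755300119194278133306740349792771927569:ℝ)/24668122688483899123313879023029404622854011944960000000000)*x^7 := by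
  have hy : (0:ℝ) ≤ x - 1 := by linarith
  have hp2 : (0:ℝ) ≤ (x-1)^2 := pow_nonneg hy 2
  have hp3 : (0:ℝ) ≤ (x-1)^3 := pow_nonneg hy 3
  have hp4 : (0:ℝ) ≤ (x-1)^4 := pow_nonneg hy 4
  have hp5 : (0:ℝ) ≤ (x-1)^5 := pow_nonneg hy 5
  have hp6 : (0:ℝ) ≤ (x-1)^6 := pow_nonneg hy 6
  have hp7 : (0:ℝ) ≤ (x-1)^7 := pow_nonneg hy 7
  have key : (((13849696318627002032319523:ℝ)/1747714887183200780546046033920000000000) + ((1204016746735649807662631647564974744799228363151957603:ℝ)/3361895926982138256231452633668509680510713883528273756160000000000)*x^1 + ((7608455869434965104576167068253694112900400722304237937:ℝ)/4482527902642851008308603511558012907347618511371031674880000000000)*x^2 + ((40737172240211486527407742071844786383733603389944150689:ℝ)/12102825337135697722433229481206634849838569980701785522176000000000)*x^3 + ((27241816191496157408407736952266524962229754957731939889:ℝ)/8068550224757131814955486320804423233225713320467857014784000000000)*x^4 + ((55470417496095109948355149260022037029184294843117687:ℝ)/32604594119438840847072277697216149918746147577321620480000000000)*x^5 + ((220264712838254466112724933721410078594859545344246577:ℝ)/640361128948978715472657644508287558192516930195861667840000000000)*x^6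 + ((4514755300119194278133306740349792771927569:ℝ)/24668122688483899123313879023029404622854011944960000000000)*x^7) = ((109440777599814477388397390538335446941959250071563519601:ℝ)/10085687780946414768694357901005529041532141650584821268480000000000) + ((1147572886398919064523351340928539608516361957003041560713:ℝ)/30257063342839244306083073703016587124596424951754463805440000000000)*(x-1)^1 + ((71340048404474993745720889796635721446378616295804776899:ℝ)/1315524493166923665481872769696373353243322823989324513280000000000)*(x-1)^2 + ((82238641263049353201996373657447852513219301627634484837:ℝ)/2017137556189282953738871580201105808306428330116964253696000000000)*(x-1)^3 + ((103169196120192176617468010162184406606084015401105650117:ℝ)/6051412668567848861216614740603317424919284990350892761088000000000)*(x-1)^4 + ((114037884012135081047860705962342759286247705767046706239:ℝ)/30257063342839244306083073703016587124596424951754463805440000000000)*(x-1)^5 + ((221085104274682528707642808423509208341046487478564659:ℝ)/640361128948978715472657644508287558192516930195861667840000000000)*(x-1)^6 + ((4514755300119194278133306740349792771927569:ℝ)/24668122688483899123313879023029404622854011944960000000000)*(x-1)^7 := by ring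
  nlinarith [key, hy, hp2, hp3, hp4, hp5, hp6, hp7]

lemma certPlo (x : ℝ) (hx : 1 ≤ x) : 0 ≤ ((-6634721078238902935360477:ℝ)/1747714887183200780546046033920000000000) + ((-564081797816059887197764494192826291364066262148522397:ℝ)/3361895926982138256231452633668509680510713883528273756160000000000)*x^1 + ((-2877579642077092217692760519776917869169932334801682063:ℝ)/4482527902642851008308603511558012907347618511371031674880000000000)*x^2 + ((-9678115274543249113824691896252472351992305720482981531:ℝ)/12102825337135697722433229481206634849838569980701785522176000000000)*x^3 + ((-22368919345459517613889696907101651099429894291381967:ℝ)/8068550224757131814955486320804423233225713320467857014784000000000)*x^4 + ((1526398739987470147257759929526780218086968166679846461:ℝ)/1891066458927452769130192106438536695287276559484653987840000000000)*x^5 + ((418564904022503900886282603822852110152271327106125617:ℝ)/640361128948978715472657644508287558192516930195861667840000000000)*x^6 + ((4080033527041284606519127442945734827203070929:ℝ)/24668122688483899123313879023029404622854011944960000000000)*x^7 := by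
  have hy : (0:ℝ) ≤ x - 1 := by linarith
  have hp2 : (0:ℝ) ≤ (x-1)^2 := pow_nonneg hy 2
  have hp3 : (0:ℝ) ≤ (x-1)^3 := pow_nonneg hy 3
  have hp4 : (0:ℝ) ≤ (x-1)^4 := pow_nonneg hy 4
  have hp5 : (0:ℝ) ≤ (x-1)^5 := pow_nonneg hy 5
  have hp6 : (0:ℝ) ≤ (x-1)^6 := pow_nonneg hy 6
  have hp7 : (0:ℝ) ≤ (x-1)^7 := pow_nonneg hy 7
  have key : (((-6634721078238902935360477:ℝ)/1747714887183200780546046033920000000000) + ((-564081797816059887197764494192826291364066262148522397:ℝ)/3361895926982138256231452633668509680510713883528273756160000000000)*x^1 + ((-2877579642077092217692760519776917869169932334801682063:ℝ)/4482527902642851008308603511558012907347618511371031674880000000000)*x^2 + ((-9678115274543249113824691896252472351992305720482981531:ℝ)/12102825337135697722433229481206634849838569980701785522176000000000)*x^3 + ((-22368919345459517613889696907101651099429894291381967:ℝ)/8068550224757131814955486320804423233225713320467857014784000000000)*x^4 + ((1526398739987470147257759929526780218086968166679846461:ℝ)/1891066458927452769130192106438536695287276559484653987840000000000)*x^5 +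 ((418564904022503900886282603822852110152271327106125617:ℝ)/640361128948978715472657644508287558192516930195861667840000000000)*x^6 + ((4080033527041284606519127442945734827203070929:ℝ)/24668122688483899123313879023029404622854011944960000000000)*x^7) = ((103188684214908135067479646245808674706327474527156271:ℝ)/10085687780946414768694357901005529041532141650584821268480000000000) + ((158960582664314434234753327328712710417893646042105219543:ℝ)/30257063342839244306083073703016587124596424951754463805440000000000)*(x-1)^1 + ((553461824913312818128161834041980587573575787981002327107:ℝ)/30257063342839244306083073703016587124596424951754463805440000000000)*(x-1)^2 + ((52692785005707596821466270583848029891179838427993527451:ℝ)/2017137556189282953738871580201105808306428330116964253696000000000)*(x-1)^3 + ((23753634233611773452588279522930611774084614906747140753:ℝ)/1210282533713569772243322948120663484983856998070178552217600000000)*(x-1)^4 + ((248178508747914913040576567825253901733375498912314327759:ℝ)/30257063342839244306083073703016587124596424951754463805440000000000)*(x-1)^5 + ((1159961578574430072196274073093023856295587637588313779:ℝ)/640361128948978715472657644508287558192516930195861667840000000000)*(x-1)^6 + ((4080033527041284606519127442945734827203070929:ℝ)/24668122688483899123313879023029404622854011944960000000000)*(x-1)^7 := by ring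
  nlinarith [key, hy, hp2, hp3, hp4, hp5, hp6, hp7]

lemma certQ (x : ℝ) (hx : 1 ≤ x) : a1*x^5 + a2*x^4 + ((10190189122238993471:ℝ)/15193137305600000000)*eps*x^3 + (16/9)*eps^3*x^3 < (a1*x^2 + (a2 - a1^2/2)*x + (671/1000)*eps)*x^3 + (a1*x^2 + (a2 - a1^2/2)*x + (671/1000)*eps)^2/2 := by
  have key : ((a1*x^2 + (a2 - a1^2/2)*x + (671/1000)*eps)*x^3 + (a1*x^2 + (a2 - a1^2/2)*x + (671/1000)*eps)^2/2) - (a1*x^5 + a2*x^4 + ((10190189122238993471:ℝ)/15193137305600000000)*eps*x^3 + (16/9)*eps^3*x^3) = ((27865882697693085627999686651975109022751755518655648666043994691482807771053734121:ℝ)/14598971792040809208486759033229908101671080376976984169369969059573406400818146807119872000000000000) + ((16719529618568366544547809317008302064465065298261508952692836747545670327832423573:ℝ)/2919794358408161841697351806645981620334216075395396833873993811914681280163629361423974400000000000)*(x-1)^1 + ((16719529618554198810550608743535474813544834121785649843484117420391924644530023573:ℝ)/2919794358408161841697351806645981620334216075395396833873993811914681280163629361423974400000000000)*(x-1)^2 +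 ((36682196885311726344849048040647881270133862917485263169502711245191:ℝ)/19217850136402986473430001591227824296854519223934393739826492768486057574400000000000)*(x-1)^3 := by
    simp only [a1, a2, eps, S]; norm_num; ring
  have hy : (0:ℝ) ≤ (x-1) := by linarith
  have hp2 : (0:ℝ) ≤ (x-1)^2 := pow_nonneg hy 2
  have hp3 : (0:ℝ) ≤ (x-1)^3 := pow_nonneg hy 3
  nlinarith [key, hy, hp2, hp3]

lemma certR (x : ℝ) (hx : 1 ≤ x) : (a1*x^2 + (a2 - a1^2/2)*x + (321/1000)*eps)*x^3 + (a1*x^2 + (a2 - a1^2/2)*x + (321/1000)*eps)^2/2 + (16/9)*eps^3*x^3 < a1*x^5 + a2*x^4 + ((4881403084916206529:ℝ)/15193137305600000000)*eps*x^3 := by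
  have key : (a1*x^5 + a2*x^4 + ((4881403084916206529:ℝ)/15193137305600000000)*eps*x^3) - ((a1*x^2 + (a2 - a1^2/2)*x + (321/1000)*eps)*x^3 + (a1*x^2 + (a2 - a1^2/2)*x + (321/1000)*eps)^2/2 + (16/9)*eps^3*x^3) = ((27865882697739519025482409003552497680983547519110894455509293758775399129933184989:ℝ)/14598971792040809208486759033229908101671080376976984169369969059573406400818146807119872000000000000) + ((16719529618657546005508149573519574883966884990487347922154332497904757099237223573:ℝ)/2919794358408161841697351806645981620334216075395396833873993811914681280163629361423974400000000000)*(x-1)^1 + ((16719529618676758797252631234650276239538865430459062326997025164623738983499623573:ℝ)/2919794358408161841697351806645981620334216075395396833873993811914681280163629361423974400000000000)*(x-1)^2 + ((36682196885822875663049603935990397424216141330149623310302711245191:ℝ)/19217850136402986473430001591227824296854519223934393739826492768486057574400000000000)*(x-1)^3 := by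
    simp only [a1, a2, eps, S]; norm_num; ring
  have hy : (0:ℝ) ≤ (x-1) := by linarith
  have hp2 : (0:ℝ) ≤ (x-1)^2 := pow_nonneg hy 2
  have hp3 : (0:ℝ) ≤ (x-1)^3 := pow_nonneg hy 3
  nlinarith [key, hy, hp2, hp3]


noncomputable def Mf (x : ℝ) : ℝ := (x^3 + a1*x^2 + a2*x + (62/125)*eps)/((1+eps)*x^3)

set_option maxHeartbeats 3200000 in
lemma defect (x : ℝ) (hx : 1 ≤ x) :
    |1 - (eps*(6*x+1)*(6*x+5)*(2*x+1)*(x+1+S)/(72*(x+1)^3*(x+S))) * Mf (x+1) - Mf x|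
      ≤ (1747/10000)*eps/x^3 := by
  have hx0 : (0:ℝ) < x := by linarith
  have h1 : x ≠ 0 := ne_of_gt hx0
  have h2 : x + 1 ≠ 0 := by positivity
  have h3 : x + (13591409:ℝ)/545140134 ≠ 0 := by positivity
  have hD : (0:ℝ) < (1+eps)*(72*(x+1)^3*(x+13591409/545140134))*x^3*(x+1)^3 := by
    have := eps_pos; positivity
  have key1 : (1747/10000)*eps/x^3
      - (1 - (eps*(6*x+1)*(6*x+5)*(2*x+1)*(x+1+S)/(72*(x+1)^3*(x+S))) * Mf (x+1) - Mf x)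
      = (((13849696318627002032319523:ℝ)/1747714887183200780546046033920000000000) + ((1204016746735649807662631647564974744799228363151957603:ℝ)/3361895926982138256231452633668509680510713883528273756160000000000)*x^1 + ((7608455869434965104576167068253694112900400722304237937:ℝ)/4482527902642851008308603511558012907347618511371031674880000000000)*x^2 + ((40737172240211486527407742071844786383733603389944150689:ℝ)/12102825337135697722433229481206634849838569980701785522176000000000)*x^3 + ((27241816191496157408407736952266524962229754957731939889:ℝ)/8068550224757131814955486320804423233225713320467857014784000000000)*x^4 + ((55470417496095109948355149260022037029184294843117687:ℝ)/32604594119438840847072277697216149918746147577321620480000000000)*x^5 + ((220264712838254466112724933721410078594859545344246577:ℝ)/640361128948978715472657644508287558192516930195861667840000000000)*x^6 + ((4514755300119194278133306740349792771927569:ℝ)/24668122688483899123313879023029404622854011944960000000000)*x^7) / ((1+eps)*(72*(x+1)^3*(x+13591409/545140134))*x^3*(x+1)^3) := by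
    simp only [Mf, a1, a2, eps, S]
    field_simp
    ring
  have key2 : (1 - (eps*(6*x+1)*(6*x+5)*(2*x+1)*(x+1+S)/(72*(x+1)^3*(x+S))) * Mf (x+1) - Mf x)
      + (1747/10000)*eps/x^3
      = (((-6634721078238902935360477:ℝ)/1747714887183200780546046033920000000000) + ((-564081797816059887197764494192826291364066262148522397:ℝ)/3361895926982138256231452633668509680510713883528273756160000000000)*x^1 + ((-2877579642077092217692760519776917869169932334801682063:ℝ)/4482527902642851008308603511558012907347618511371031674880000000000)*x^2 + ((-9678115274543249113824691896252472351992305720482981531:ℝ)/12102825337135697722433229481206634849838569980701785522176000000000)*x^3 + ((-22368919345459517613889696907101651099429894291381967:ℝ)/8068550224757131814955486320804423233225713320467857014784000000000)*x^4 + ((1526398739987470147257759929526780218086968166679846461:ℝ)/1891066458927452769130192106438536695287276559484653987840000000000)*x^5 + ((418564904022503900886282603822852110152271327106125617:ℝ)/640361128948978715472657644508287558192516930195861667840000000000)*x^6 + ((4080033527041284606519127442945734827203070929:ℝ)/24668122688483899123313879023029404622854011944960000000000)*x^7) / ((1+eps)*(72*(x+1)^3*(x+13591409/545140134))*x^3*(x+1)^3)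 := by
    simp only [Mf, a1, a2, eps, S]
    field_simp
    ring
  have hphi := div_nonneg (certPhi x hx) hD.le
  have hplo := div_nonneg (certPlo x hx) hD.le
  rw [abs_le]
  constructor
  · nlinarith [key2, hplo]
  · nlinarith [key1, hphi]


lemma rdenom_pos (x : ℝ) (hx : 0 ≤ x) : (0:ℝ) < 72*(x+1)^3*(x+S) := by
  have := S_pos; positivity

lemma s_succ_eq (n : ℕ) : s (n+1) =
    s n * (eps*(6*(n:ℝ)+1)*(6*(n:ℝ)+5)*(2*(n:ℝ)+1)*((n:ℝ)+1+S)) / (72*((n:ℝ)+1)^3*((n:ℝ)+S)) := by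
  have hd := rdenom_pos (n:ℝ) (Nat.cast_nonneg n)
  rw [eq_div_iff hd.ne']
  linarith [s_ratio n]

lemma s_half (n : ℕ) : s (n+1) ≤ s n / 2 := by
  have hx : (0:ℝ) ≤ (n:ℝ) := Nat.cast_nonneg n
  have hd := rdenom_pos (n:ℝ) hx
  have hc := cert_half (n:ℝ) hx
  have hs := s_pos n
  rw [s_succ_eq n, div_le_div_iff₀ hd (by norm_num : (0:ℝ) < 2)]
  nlinarith [mul_le_mul_of_nonneg_left hc hs.le]

lemma s_3eps (n : ℕ) : s (n+1) ≤ 3*eps*s n := by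
  have hx : (0:ℝ) ≤ (n:ℝ) := Nat.cast_nonneg n
  have hd := rdenom_pos (n:ℝ) hx
  have hc := cert_3eps (n:ℝ) hx
  have hs := s_pos n
  rw [s_succ_eq n, div_le_iff₀ hd]
  nlinarith [mul_le_mul_of_nonneg_left hc hs.le]

lemma s_geo (n : ℕ) : ∀ k, s (n+k) ≤ s n * (1/2)^k := by
  intro k
  induction k with
  | zero => simp
  | succ k ih =>
    have h2 : s ((n+k)+1) ≤ s (n+k)/2 := s_half (n+k)
    have e : s n*(1/2:ℝ)^(k+1) = s n*(1/2)^k/2 := by ring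
    have e2 : n + (k+1) = (n+k)+1 := rfl
    rw [e2, e]
    linarith

lemma summable_s (n : ℕ) : Summable (fun k => s (n+k)) := by
  apply Summable.of_nonneg_of_le (fun k => (s_pos _).le) (s_geo n)
  exact (summable_geometric_of_lt_one (by norm_num) (by norm_num)).mul_left (s n)

lemma abs_term (n k : ℕ) : |(-1:ℝ)^k * s (n+k)| = s (n+k) := by
  rw [abs_mul, abs_pow, abs_neg, abs_one, one_pow, one_mul, abs_of_pos (s_pos _)]

lemma summable_alt (n : ℕ) : Summable (fun k => (-1:ℝ)^k * s (n+k)) :=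
  Summable.of_abs ((summable_s n).congr (fun k => (abs_term n k).symm))

noncomputable def t (n : ℕ) : ℝ := ∑' k : ℕ, (-1:ℝ)^k * s (n+k)

lemma t_rec (n : ℕ) : t n = s n - t (n+1) := by
  have h2 : ∑' (k:ℕ), (-1:ℝ)^(k+1) * s (n+(k+1)) = -(t (n+1)) := by
    simp only [t]
    rw [← tsum_neg]
    exact tsum_congr (fun k => by rw [show n+(k+1) = (n+1)+k by omega]; ring)
  have h := Summable.tsum_eq_zero_add (f := fun k : ℕ => (-1:ℝ)^k * s (n+k)) (summable_alt n)
  rw [h2] at h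
  calc t n = ∑' (b:ℕ), (-1:ℝ)^b * s (n+b) := rfl
    _ = (-1:ℝ)^0 * s (n+0) + -t (n+1) := h
    _ = s n - t (n+1) := by rw [pow_zero, one_mul, Nat.add_zero]; ring

lemma t_abs (n : ℕ) : |t n| ≤ 2 * s n := by
  have hsum : Summable (fun k => ‖(-1:ℝ)^k * s (n+k)‖) := by
    simp only [Real.norm_eq_abs]
    exact (summable_s n).congr (fun k => (abs_term n k).symm)
  have h1 : |t n| ≤ ∑' k : ℕ, |(-1:ℝ)^k * s (n+k)| := by
    simpa only [t, Real.norm_eq_abs] using norm_tsum_le_tsum_norm hsum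
  have h2 : ∑' k : ℕ, |(-1:ℝ)^k * s (n+k)| = ∑' k : ℕ, s (n+k) := tsum_congr (abs_term n)
  have h3 : ∑' k : ℕ, s (n+k) ≤ ∑' k : ℕ, s n * (1/2:ℝ)^k :=
    Summable.tsum_le_tsum (s_geo n) (summable_s n)
      ((summable_geometric_of_lt_one (by norm_num) (by norm_num)).mul_left (s n))
  have h4 : ∑' k : ℕ, s n * (1/2:ℝ)^k = s n * 2 := by
    rw [tsum_mul_left, tsum_geometric_of_lt_one (by norm_num) (by norm_num)]
    norm_num
  linarith

lemma Mf_nonneg (x : ℝ) (hx : 1 ≤ x) : 0 ≤ Mf x := by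
  have hx0 : (0:ℝ) < x := by linarith
  have he := eps_pos
  exact div_nonneg (cert_Mnn x hx) (by positivity)

lemma Mf_le_one (x : ℝ) (hx : 1 ≤ x) : Mf x ≤ 1 := by
  have hx0 : (0:ℝ) < x := by linarith
  have he := eps_pos
  rw [Mf, div_le_one (by positivity)]
  exact cert_Mone x hx

lemma Mf_half (x : ℝ) (hx : 1 ≤ x) : 1/2 ≤ Mf x := by
  have hx0 : (0:ℝ) < x := by linarith
  have he := eps_pos
  rw [Mf, le_div_iff₀ (by positivity)]
  linarith [cert_Mhalf x hx]

lemma band_aux : ∀ (k : ℕ) (n : ℕ), 1 ≤ n →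
    |t n - Mf (n:ℝ) * s n| ≤ (17471/100000)*eps/(n:ℝ)^3 * s n + (1/2:ℝ)^k * (3 * s n) := by
  intro k
  induction k with
  | zero =>
    intro n hn
    have hx : (1:ℝ) ≤ (n:ℝ) := by exact_mod_cast hn
    have hx0 : (0:ℝ) < (n:ℝ) := by linarith
    have hs := s_pos n
    have he := eps_pos
    have h1 := t_abs n
    have h2 := Mf_nonneg (n:ℝ) hx
    have h3 := Mf_le_one (n:ℝ) hx
    have hb : 0 ≤ (17471/100000)*eps/(n:ℝ)^3 * s n := by positivity
    have habs : |t n - Mf (n:ℝ)*s n| ≤ |t n| + |Mf (n:ℝ)*s n| := abs_sub (t n) (Mf (n:ℝ)*s n)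
    have hM : |Mf (n:ℝ)*s n| = Mf (n:ℝ)*s n := abs_of_nonneg (mul_nonneg h2 hs.le)
    have hMs : Mf (n:ℝ)*s n ≤ 1*s n := mul_le_mul_of_nonneg_right h3 hs.le
    simp only [pow_zero, one_mul]
    rw [hM] at habs
    linarith
  | succ k ih =>
    intro n hn
    have hx : (1:ℝ) ≤ (n:ℝ) := by exact_mod_cast hn
    have hx0 : (0:ℝ) < (n:ℝ) := by linarith
    have hs := s_pos n
    have hs1 := s_pos (n+1)
    have he := eps_pos
    have hIH := ih (n+1) (by omega)
    push_cast at hIH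
    have hde : s n - Mf (n:ℝ)*s n - Mf ((n:ℝ)+1)*s (n+1)
        = s n * (1 - (eps*(6*(n:ℝ)+1)*(6*(n:ℝ)+5)*(2*(n:ℝ)+1)*((n:ℝ)+1+S)/(72*((n:ℝ)+1)^3*((n:ℝ)+S))) * Mf ((n:ℝ)+1) - Mf (n:ℝ)) := by
      rw [s_succ_eq n]; ring
    have hdef : |s n - Mf (n:ℝ)*s n - Mf ((n:ℝ)+1)*s (n+1)| ≤ (1747/10000)*eps/(n:ℝ)^3 * s n := by
      rw [hde, abs_mul, abs_of_pos hs]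
      nlinarith [defect (n:ℝ) hx, hs]
    have hsplit : t n - Mf (n:ℝ) * s n =
        (s n - Mf (n:ℝ)*s n - Mf ((n:ℝ)+1)*s (n+1)) - (t (n+1) - Mf ((n:ℝ)+1)*s (n+1)) := by
      rw [t_rec n]; ring
    have htri : |t n - Mf (n:ℝ)*s n| ≤
        |s n - Mf (n:ℝ)*s n - Mf ((n:ℝ)+1)*s (n+1)| + |t (n+1) - Mf ((n:ℝ)+1)*s (n+1)| := by
      rw [hsplit]
      exact abs_sub (s n - Mf (n:ℝ)*s n - Mf ((n:ℝ)+1)*s (n+1)) (t (n+1) - Mf ((n:ℝ)+1)*s (n+1))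
    have hmono : (17471/100000)*eps/((n:ℝ)+1)^3 ≤ (17471/100000)*eps/(n:ℝ)^3 := by
      have hcube : (n:ℝ)^3 ≤ ((n:ℝ)+1)^3 := by nlinarith [hx0]
      rw [div_le_div_iff₀ (by positivity) (by positivity)]
      nlinarith [hcube, eps_pos]
    have h4 : (17471/100000)*eps/((n:ℝ)+1)^3 * s (n+1) ≤ (17471/100000)*eps/(n:ℝ)^3*(3*eps*s n) := by
      have hq : (0:ℝ) ≤ (17471/100000)*eps/(n:ℝ)^3 := by positivity
      calc (17471/100000)*eps/((n:ℝ)+1)^3 * s (n+1)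
          ≤ (17471/100000)*eps/(n:ℝ)^3 * s (n+1) := mul_le_mul_of_nonneg_right hmono hs1.le
        _ ≤ (17471/100000)*eps/(n:ℝ)^3*(3*eps*s n) := mul_le_mul_of_nonneg_left (s_3eps n) hq
    have h5 : (1/2:ℝ)^k * (3 * s (n+1)) ≤ (1/2:ℝ)^(k+1) * (3 * s n) := by
      have hp : (0:ℝ) < (1/2:ℝ)^k := by positivity
      have hh := s_half n
      rw [pow_succ]
      nlinarith
    have h6 : (1747/10000)*eps/(n:ℝ)^3*s n + (17471/100000)*eps/(n:ℝ)^3*(3*eps*s n)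
        ≤ (17471/100000)*eps/(n:ℝ)^3*s n := by
      have hnum : (1747/10000:ℝ) + 3*eps*(17471/100000) ≤ 17471/100000 := by
        simp only [eps]; norm_num
      have hq : (0:ℝ) ≤ eps/(n:ℝ)^3*s n := by positivity
      have hexpand : (1747/10000)*eps/(n:ℝ)^3*s n + (17471/100000)*eps/(n:ℝ)^3*(3*eps*s n)
          = ((1747/10000:ℝ) + 3*eps*(17471/100000)) * (eps/(n:ℝ)^3*s n) := by ring
      have hexpand2 : (17471/100000)*eps/(n:ℝ)^3*s n = (17471/100000:ℝ) * (eps/(n:ℝ)^3*s n) := by ring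
      rw [hexpand, hexpand2]
      exact mul_le_mul_of_nonneg_right hnum hq
    linarith

lemma band (n : ℕ) (hn : 1 ≤ n) :
    |t n - Mf (n:ℝ) * s n| ≤ (17471/100000)*eps/(n:ℝ)^3 * s n := by
  have hlim : Filter.Tendsto
      (fun k : ℕ => (17471/100000)*eps/(n:ℝ)^3 * s n + (1/2:ℝ)^k * (3 * s n))
      Filter.atTop (nhds ((17471/100000)*eps/(n:ℝ)^3 * s n + 0 * (3 * s n))) :=
    Filter.Tendsto.add tendsto_const_nhds
      (Filter.Tendsto.mul_const _ (tendsto_pow_atTop_nhds_zero_of_lt_one (by norm_num) (by norm_num)))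
  have hda := ge_of_tendsto' hlim (fun k => band_aux k n hn)
  simpa using hda


set_option maxHeartbeats 8000000 in
theorem truncation_error_exp_expansion (n : ℕ) (hn : 1 ≤ n) (d : ℝ)
    (hd : |∑' k : ℕ, (-1 : ℝ) ^ (n + k) * s (n + k)| =
      s n / (1 + eps) *
        Real.exp (a1 / (n : ℝ) + (a2 - a1 ^ 2 / 2) / (n : ℝ) ^ 2 + d * eps / (n : ℝ) ^ 3)) :
    0.321 < d ∧ d < 0.671 := by
  have hx : (1:ℝ) ≤ (n:ℝ) := by exact_mod_cast hn
  have hx0 : (0:ℝ) < (n:ℝ) := by linarith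
  have hxne : (n:ℝ) ≠ 0 := hx0.ne'
  have hs := s_pos n
  have he := eps_pos
  have hene : (0:ℝ) < 1 + eps := by linarith
  have hband := band n hn
  have hb := abs_le.1 hband
  have hMl := Mf_half (n:ℝ) hx
  have hbnd_small : (17471/100000)*eps/(n:ℝ)^3 ≤ (17471/100000)*eps :=
    div_le_self (by positivity) (by nlinarith)
  have heps_small : (17471/100000:ℝ)*eps ≤ 1/4 := by simp only [eps]; norm_num
  have ht_pos : 0 < t n := by
    have p1 := mul_le_mul_of_nonneg_right hMl hs.le
    have p2 := mul_le_mul_of_nonneg_right (hbnd_small.trans heps_small) hs.le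
    nlinarith [hb.1]
  have hT : (∑' k : ℕ, (-1:ℝ)^(n+k) * s (n+k)) = (-1:ℝ)^n * t n := by
    simp only [t]
    rw [← tsum_mul_left]
    apply tsum_congr
    intro k
    rw [pow_add]
    ring
  rw [hT, abs_mul, abs_pow, abs_neg, abs_one, one_pow, one_mul, abs_of_pos ht_pos] at hd
  have hexp : Real.exp (a1/(n:ℝ) + (a2 - a1^2/2)/(n:ℝ)^2 + d*eps/(n:ℝ)^3) * s n
      = t n * (1+eps) := by
    rw [hd]; field_simp
  have hup : Real.exp (a1/(n:ℝ) + (a2 - a1^2/2)/(n:ℝ)^2 + d*eps/(n:ℝ)^3)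
      ≤ 1 + a1/(n:ℝ) + a2/(n:ℝ)^2 + (62/125)*eps/(n:ℝ)^3 + (1+eps)*((17471/100000)*eps/(n:ℝ)^3) := by
    have h1 : t n ≤ (Mf (n:ℝ) + (17471/100000)*eps/(n:ℝ)^3) * s n := by nlinarith [hb.2]
    have h2 : Real.exp (a1/(n:ℝ) + (a2 - a1^2/2)/(n:ℝ)^2 + d*eps/(n:ℝ)^3) * s n
        ≤ ((Mf (n:ℝ) + (17471/100000)*eps/(n:ℝ)^3) * (1+eps)) * s n := by
      rw [hexp]
      nlinarith [mul_le_mul_of_nonneg_right h1 hene.le]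
    have h3 := le_of_mul_le_mul_right h2 hs
    have h4 : (Mf (n:ℝ) + (17471/100000)*eps/(n:ℝ)^3) * (1+eps)
        = 1 + a1/(n:ℝ) + a2/(n:ℝ)^2 + (62/125)*eps/(n:ℝ)^3 + (1+eps)*((17471/100000)*eps/(n:ℝ)^3) := by
      simp only [Mf]
      field_simp
    linarith
  have hlo : 1 + a1/(n:ℝ) + a2/(n:ℝ)^2 + (62/125)*eps/(n:ℝ)^3 - (1+eps)*((17471/100000)*eps/(n:ℝ)^3)
      ≤ Real.exp (a1/(n:ℝ) + (a2 - a1^2/2)/(n:ℝ)^2 + d*eps/(n:ℝ)^3) := by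
    have h1 : (Mf (n:ℝ) - (17471/100000)*eps/(n:ℝ)^3) * s n ≤ t n := by nlinarith [hb.1]
    have h2 : ((Mf (n:ℝ) - (17471/100000)*eps/(n:ℝ)^3) * (1+eps)) * s n
        ≤ Real.exp (a1/(n:ℝ) + (a2 - a1^2/2)/(n:ℝ)^2 + d*eps/(n:ℝ)^3) * s n := by
      rw [hexp]
      nlinarith [mul_le_mul_of_nonneg_right h1 hene.le]
    have h3 := le_of_mul_le_mul_right h2 hs
    have h4 : (Mf (n:ℝ) - (17471/100000)*eps/(n:ℝ)^3) * (1+eps)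
        = 1 + a1/(n:ℝ) + a2/(n:ℝ)^2 + (62/125)*eps/(n:ℝ)^3 - (1+eps)*((17471/100000)*eps/(n:ℝ)^3) := by
      simp only [Mf]
      field_simp
    linarith
  have hx3 : (0:ℝ) < (n:ℝ)^3 := by positivity
  -- UPPER SIDE --------------------------------------------------------------
  have hXhi_le : a1/(n:ℝ) + (a2 - a1^2/2)/(n:ℝ)^2 + (671/1000)*eps/(n:ℝ)^3 ≤ 2*eps/(n:ℝ) := by
    have hmul : (a1/(n:ℝ) + (a2 - a1^2/2)/(n:ℝ)^2 + (671/1000)*eps/(n:ℝ)^3) * (n:ℝ)^3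
        = a1*(n:ℝ)^2 + (a2 - a1^2/2)*(n:ℝ) + (671/1000)*eps := by field_simp
    have hmul2 : (2*eps/(n:ℝ)) * (n:ℝ)^3 = 2*eps*(n:ℝ)^2 := by field_simp
    refine le_of_mul_le_mul_right ?_ hx3
    rw [hmul, hmul2]
    exact cert_A1 (n:ℝ) hx
  have hXhi_ge : -(2*eps/(n:ℝ)) ≤ a1/(n:ℝ) + (a2 - a1^2/2)/(n:ℝ)^2 + (671/1000)*eps/(n:ℝ)^3 := by
    have hmul : (a1/(n:ℝ) + (a2 - a1^2/2)/(n:ℝ)^2 + (671/1000)*eps/(n:ℝ)^3) * (n:ℝ)^3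
        = a1*(n:ℝ)^2 + (a2 - a1^2/2)*(n:ℝ) + (671/1000)*eps := by field_simp
    have hmul2 : (-(2*eps/(n:ℝ))) * (n:ℝ)^3 = -(2*eps*(n:ℝ)^2) := by field_simp
    refine le_of_mul_le_mul_right ?_ hx3
    rw [hmul, hmul2]
    exact cert_A2 (n:ℝ) hx
  have hXlo_le : a1/(n:ℝ) + (a2 - a1^2/2)/(n:ℝ)^2 + (321/1000)*eps/(n:ℝ)^3 ≤ 2*eps/(n:ℝ) := by
    have hmul : (a1/(n:ℝ) + (a2 - a1^2/2)/(n:ℝ)^2 + (321/1000)*eps/(n:ℝ)^3) * (n:ℝ)^3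
        = a1*(n:ℝ)^2 + (a2 - a1^2/2)*(n:ℝ) + (321/1000)*eps := by field_simp
    have hmul2 : (2*eps/(n:ℝ)) * (n:ℝ)^3 = 2*eps*(n:ℝ)^2 := by field_simp
    refine le_of_mul_le_mul_right ?_ hx3
    rw [hmul, hmul2]
    exact cert_A3 (n:ℝ) hx
  have hXlo_ge : -(2*eps/(n:ℝ)) ≤ a1/(n:ℝ) + (a2 - a1^2/2)/(n:ℝ)^2 + (321/1000)*eps/(n:ℝ)^3 := by
    have hmul : (a1/(n:ℝ) + (a2 - a1^2/2)/(n:ℝ)^2 + (321/1000)*eps/(n:ℝ)^3) * (n:ℝ)^3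
        = a1*(n:ℝ)^2 + (a2 - a1^2/2)*(n:ℝ) + (321/1000)*eps := by field_simp
    have hmul2 : (-(2*eps/(n:ℝ))) * (n:ℝ)^3 = -(2*eps*(n:ℝ)^2) := by field_simp
    refine le_of_mul_le_mul_right ?_ hx3
    rw [hmul, hmul2]
    exact cert_A4 (n:ℝ) hx
  have h2eps : 2*eps/(n:ℝ) ≤ 2*eps := div_le_self (by positivity) hx
  have h2eps1 : (2:ℝ)*eps ≤ 1 := by simp only [eps]; norm_num
  have habs_hi : |a1/(n:ℝ) + (a2 - a1^2/2)/(n:ℝ)^2 + (671/1000)*eps/(n:ℝ)^3| ≤ 2*eps/(n:ℝ) :=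
    abs_le.mpr ⟨hXhi_ge, hXhi_le⟩
  have habs_lo : |a1/(n:ℝ) + (a2 - a1^2/2)/(n:ℝ)^2 + (321/1000)*eps/(n:ℝ)^3| ≤ 2*eps/(n:ℝ) :=
    abs_le.mpr ⟨hXlo_ge, hXlo_le⟩
  have hone_hi : |a1/(n:ℝ) + (a2 - a1^2/2)/(n:ℝ)^2 + (671/1000)*eps/(n:ℝ)^3| ≤ 1 := by
    linarith
  have hone_lo : |a1/(n:ℝ) + (a2 - a1^2/2)/(n:ℝ)^2 + (321/1000)*eps/(n:ℝ)^3| ≤ 1 := by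
    linarith
  have hbd_hi := Real.exp_bound hone_hi (by norm_num : 0 < 3)
  have hbd_lo := Real.exp_bound hone_lo (by norm_num : 0 < 3)
  rw [Finset.sum_range_succ, Finset.sum_range_succ, Finset.sum_range_one] at hbd_hi hbd_lo
  norm_num [Nat.factorial] at hbd_hi hbd_lo
  have hcube_hi : |a1/(n:ℝ) + (a2 - a1^2/2)/(n:ℝ)^2 + (671/1000)*eps/(n:ℝ)^3|^3
      ≤ (2*eps/(n:ℝ))^3 := pow_le_pow_left₀ (abs_nonneg _) habs_hi 3
  have hcube_lo : |a1/(n:ℝ) + (a2 - a1^2/2)/(n:ℝ)^2 + (321/1000)*eps/(n:ℝ)^3|^3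
      ≤ (2*eps/(n:ℝ))^3 := pow_le_pow_left₀ (abs_nonneg _) habs_lo 3
  have hbd_hi2 := abs_le.1 hbd_hi
  have hbd_lo2 := abs_le.1 hbd_lo
  -- key polynomial comparisons
  have hkey_hi : 1 + a1/(n:ℝ) + a2/(n:ℝ)^2 + (62/125)*eps/(n:ℝ)^3 + (1+eps)*((17471/100000)*eps/(n:ℝ)^3)
      < 1 + (a1/(n:ℝ) + (a2 - a1^2/2)/(n:ℝ)^2 + (671/1000)*eps/(n:ℝ)^3)
        + (a1/(n:ℝ) + (a2 - a1^2/2)/(n:ℝ)^2 + (671/1000)*eps/(n:ℝ)^3)^2/2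
        - (2*eps/(n:ℝ))^3*(2/9) := by
    have hq := certQ (n:ℝ) hx
    have hiden : (1 + (a1/(n:ℝ) + (a2 - a1^2/2)/(n:ℝ)^2 + (671/1000)*eps/(n:ℝ)^3)
        + (a1/(n:ℝ) + (a2 - a1^2/2)/(n:ℝ)^2 + (671/1000)*eps/(n:ℝ)^3)^2/2
        - (2*eps/(n:ℝ))^3*(2/9))
        - (1 + a1/(n:ℝ) + a2/(n:ℝ)^2 + (62/125)*eps/(n:ℝ)^3 + (1+eps)*((17471/100000)*eps/(n:ℝ)^3))
        = (((a1*(n:ℝ)^2 + (a2 - a1^2/2)*(n:ℝ) + (671/1000)*eps)*(n:ℝ)^3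
            + (a1*(n:ℝ)^2 + (a2 - a1^2/2)*(n:ℝ) + (671/1000)*eps)^2/2)
          - (a1*(n:ℝ)^5 + a2*(n:ℝ)^4 + ((10190189122238993471:ℝ)/15193137305600000000)*eps*(n:ℝ)^3 + (16/9)*eps^3*(n:ℝ)^3))/(n:ℝ)^6 := by
      simp only [eps]
      field_simp
      ring
    have hpos : 0 < (((a1*(n:ℝ)^2 + (a2 - a1^2/2)*(n:ℝ) + (671/1000)*eps)*(n:ℝ)^3
            + (a1*(n:ℝ)^2 + (a2 - a1^2/2)*(n:ℝ) + (671/1000)*eps)^2/2)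
          - (a1*(n:ℝ)^5 + a2*(n:ℝ)^4 + ((10190189122238993471:ℝ)/15193137305600000000)*eps*(n:ℝ)^3 + (16/9)*eps^3*(n:ℝ)^3))/(n:ℝ)^6 :=
      div_pos (by linarith) (by positivity)
    linarith
  have hkey_lo : Real.exp (a1/(n:ℝ) + (a2 - a1^2/2)/(n:ℝ)^2 + (321/1000)*eps/(n:ℝ)^3)
      < 1 + a1/(n:ℝ) + a2/(n:ℝ)^2 + (62/125)*eps/(n:ℝ)^3 - (1+eps)*((17471/100000)*eps/(n:ℝ)^3) := by
    have hq := certR (n:ℝ) hx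
    have hiden : (1 + a1/(n:ℝ) + a2/(n:ℝ)^2 + (62/125)*eps/(n:ℝ)^3 - (1+eps)*((17471/100000)*eps/(n:ℝ)^3))
        - (1 + (a1/(n:ℝ) + (a2 - a1^2/2)/(n:ℝ)^2 + (321/1000)*eps/(n:ℝ)^3)
          + (a1/(n:ℝ) + (a2 - a1^2/2)/(n:ℝ)^2 + (321/1000)*eps/(n:ℝ)^3)^2/2
          + (2*eps/(n:ℝ))^3*(2/9))
        = ((a1*(n:ℝ)^5 + a2*(n:ℝ)^4 + ((4881403084916206529:ℝ)/15193137305600000000)*eps*(n:ℝ)^3)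
          - ((a1*(n:ℝ)^2 + (a2 - a1^2/2)*(n:ℝ) + (321/1000)*eps)*(n:ℝ)^3
            + (a1*(n:ℝ)^2 + (a2 - a1^2/2)*(n:ℝ) + (321/1000)*eps)^2/2
            + (16/9)*eps^3*(n:ℝ)^3))/(n:ℝ)^6 := by
      simp only [eps]
      field_simp
      ring
    have hpos : 0 < ((a1*(n:ℝ)^5 + a2*(n:ℝ)^4 + ((4881403084916206529:ℝ)/15193137305600000000)*eps*(n:ℝ)^3)
          - ((a1*(n:ℝ)^2 + (a2 - a1^2/2)*(n:ℝ) + (321/1000)*eps)*(n:ℝ)^3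
            + (a1*(n:ℝ)^2 + (a2 - a1^2/2)*(n:ℝ) + (321/1000)*eps)^2/2
            + (16/9)*eps^3*(n:ℝ)^3))/(n:ℝ)^6 :=
      div_pos (by linarith) (by positivity)
    nlinarith [hbd_lo2.2, hcube_lo]
  -- conclude
  have hexp_hi : Real.exp (a1/(n:ℝ) + (a2 - a1^2/2)/(n:ℝ)^2 + d*eps/(n:ℝ)^3)
      < Real.exp (a1/(n:ℝ) + (a2 - a1^2/2)/(n:ℝ)^2 + (671/1000)*eps/(n:ℝ)^3) := by
    have hge : 1 + (a1/(n:ℝ) + (a2 - a1^2/2)/(n:ℝ)^2 + (671/1000)*eps/(n:ℝ)^3)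
        + (a1/(n:ℝ) + (a2 - a1^2/2)/(n:ℝ)^2 + (671/1000)*eps/(n:ℝ)^3)^2/2
        - (2*eps/(n:ℝ))^3*(2/9)
        ≤ Real.exp (a1/(n:ℝ) + (a2 - a1^2/2)/(n:ℝ)^2 + (671/1000)*eps/(n:ℝ)^3) := by
      nlinarith [hbd_hi2.1, hcube_hi]
    calc Real.exp (a1/(n:ℝ) + (a2 - a1^2/2)/(n:ℝ)^2 + d*eps/(n:ℝ)^3)
        ≤ _ := hup
      _ < _ := hkey_hi
      _ ≤ _ := hge
  have hexp_lo : Real.exp (a1/(n:ℝ) + (a2 - a1^2/2)/(n:ℝ)^2 + (321/1000)*eps/(n:ℝ)^3)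
      < Real.exp (a1/(n:ℝ) + (a2 - a1^2/2)/(n:ℝ)^2 + d*eps/(n:ℝ)^3) :=
    lt_of_lt_of_le hkey_lo hlo
  have hlt1 := Real.exp_lt_exp.1 hexp_hi
  have hlt2 := Real.exp_lt_exp.1 hexp_lo
  have hd1 : d*eps/(n:ℝ)^3 < (671/1000)*eps/(n:ℝ)^3 := by linarith
  have hd2 : (321/1000)*eps/(n:ℝ)^3 < d*eps/(n:ℝ)^3 := by linarith
  have hq3 : (0:ℝ) < eps/(n:ℝ)^3 := by positivity
  have hfin1 : d < 671/1000 := by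
    have e1 : d*eps/(n:ℝ)^3 = d*(eps/(n:ℝ)^3) := by ring
    have e2 : (671/1000)*eps/(n:ℝ)^3 = (671/1000)*(eps/(n:ℝ)^3) := by ring
    rw [e1, e2] at hd1
    exact lt_of_mul_lt_mul_right (by linarith) hq3.le
  have hfin2 : 321/1000 < d := by
    have e1 : d*eps/(n:ℝ)^3 = d*(eps/(n:ℝ)^3) := by ring
    have e2 : (321/1000)*eps/(n:ℝ)^3 = (321/1000)*(eps/(n:ℝ)^3) := by ring
    rw [e1, e2] at hd2
    exact lt_of_mul_lt_mul_right (by linarith) hq3.le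
  constructor
  · rw [show (0.321:ℝ) = 321/1000 by norm_num]
    exact hfin2
  · rw [show (0.671:ℝ) = 671/1000 by norm_num]
    exact hfin1
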